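/- Let F₃(ρ) = ⟨1 + A₃B₃⟩_ρ² − ⟨A₃ + B₃⟩_ρ² − ⟨A₁B₁ + A₂B₂⟩_ρ², where A_i, B_j act on qubits 1 and 2 of a three-qubit state (identity on qubit 3) and the observables are same-orientation complementary sets. If a three-qubit mixed state ρ is fully separable, then F₁(ρ) ≥ 0, F₂(ρ) ≥ 0, and F₃(ρ) ≥ 0 for all such complementary observables, where F₁ and F₂ are the analogous expressions on qubit pairs (2,3) and (1,3). -/

import Mathlib

open scoped ComplexConjugate ComplexOrder
open Finset

abbrev Q3 := Fin 2 × Fin 2 × Fin 2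

noncomputable def pσ : Fin 3 → Matrix (Fin 2) (Fin 2) ℂ :=
  ![!![0, 1; 1, 0], !![0, -Complex.I; Complex.I, 0], !![1, 0; 0, -1]]

noncomputable def I2 : Matrix (Fin 2) (Fin 2) ℂ := 1

/-- Threefold tensor product operator `X ⊗ Y ⊗ Z` on `ℂ² ⊗ ℂ² ⊗ ℂ²`. -/
noncomputable def op3 (X Y Z : Matrix (Fin 2) (Fin 2) ℂ) : Matrix Q3 Q3 ℂ :=
  Matrix.of fun p q => X p.1 q.1 * Y p.2.1 q.2.1 * Z p.2.2 q.2.2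

/-- Expectation value `tr(ρ X)` (real part). -/
noncomputable def expec (ρ X : Matrix Q3 Q3 ℂ) : ℝ := ((ρ * X).trace).re

/-- Rank-one projector `|v⟩⟨v|`. -/
noncomputable def proj (v : Q3 → ℂ) : Matrix Q3 Q3 ℂ :=
  Matrix.of fun p q => v p * conj (v q)

/-- `a · σ` for a real vector `a ∈ ℝ³`. -/
noncomputable def dotSigma (a : Fin 3 → ℝ) : Matrix (Fin 2) (Fin 2) ℂ :=
  ∑ k, a k • pσ k

/-- A right-handed orthonormal basis of ℝ³. -/
def RightHandedONB (a : Fin 3 → Fin 3 → ℝ) : Prop :=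
  (∀ i j, (∑ k, a i k * a j k) = if i = j then 1 else 0) ∧
    crossProduct (a 0) (a 1) = a 2

/-- `ρ` is a density matrix. -/
def IsDensity {n : Type*} [Fintype n] [DecidableEq n] (ρ : Matrix n n ℂ) : Prop :=
  ρ.PosSemidef ∧ ρ.trace = 1

/-- `ρ` is a fully separable three-qubit state. -/
def FullySepState (ρ : Matrix Q3 Q3 ℂ) : Prop :=
  ∃ (N : ℕ) (p : Fin N → ℝ) (ρ1 ρ2 ρ3 : Fin N → Matrix (Fin 2) (Fin 2) ℂ),
    (∀ k, 0 ≤ p k) ∧ (∑ k, p k = 1) ∧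
    (∀ k, IsDensity (ρ1 k)) ∧ (∀ k, IsDensity (ρ2 k)) ∧ (∀ k, IsDensity (ρ3 k)) ∧
    ρ = ∑ k, p k • op3 (ρ1 k) (ρ2 k) (ρ3 k)

/-- `F₁`, built from observables `B, C` on qubits 2 and 3. -/
noncomputable def F1 (B C : Fin 3 → Matrix (Fin 2) (Fin 2) ℂ) (ρ : Matrix Q3 Q3 ℂ) : ℝ :=
  expec ρ (1 + op3 I2 (B 2) (C 2)) ^ 2
    - expec ρ (op3 I2 (B 2) I2 + op3 I2 I2 (C 2)) ^ 2
    - expec ρ (op3 I2 (B 0) (C 0) + op3 I2 (B 1) (C 1)) ^ 2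

/-- `F₂`, built from observables `A, C` on qubits 1 and 3. -/
noncomputable def F2 (A C : Fin 3 → Matrix (Fin 2) (Fin 2) ℂ) (ρ : Matrix Q3 Q3 ℂ) : ℝ :=
  expec ρ (1 + op3 (A 2) I2 (C 2)) ^ 2
    - expec ρ (op3 (A 2) I2 I2 + op3 I2 I2 (C 2)) ^ 2
    - expec ρ (op3 (A 0) I2 (C 0) + op3 (A 1) I2 (C 1)) ^ 2

/-- `F₃`, built from observables `A, B` on qubits 1 and 2. -/
noncomputable def F3 (A B : Fin 3 → Matrix (Fin 2) (Fin 2) ℂ) (ρ : Matrix Q3 Q3 ℂ) : ℝ :=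
  expec ρ (1 + op3 (A 2) (B 2) I2) ^ 2
    - expec ρ (op3 (A 2) I2 I2 + op3 I2 (B 2) I2) ^ 2
    - expec ρ (op3 (A 0) (B 0) I2 + op3 (A 1) (B 1) I2) ^ 2

/-! ### Auxiliary lemmas -/

lemma trace_op3_mul (A B C X Y Z : Matrix (Fin 2) (Fin 2) ℂ) :
    (op3 A B C * op3 X Y Z).trace = (A*X).trace * (B*Y).trace * (C*Z).trace := by
  simp only [Matrix.trace, Matrix.diag, Matrix.mul_apply, op3, Matrix.of_apply,
    Fintype.sum_prod_type, Fin.sum_univ_two]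
  ring

lemma one_eq_op3 : (1 : Matrix Q3 Q3 ℂ) = op3 I2 I2 I2 := by
  ext p q
  simp [op3, I2, Matrix.one_apply, Prod.ext_iff]
  rcases p with ⟨p1,p2,p3⟩; rcases q with ⟨q1,q2,q3⟩
  by_cases h1 : p1 = q1 <;> by_cases h2 : p2 = q2 <;> by_cases h3 : p3 = q3 <;> simp [h1,h2,h3]

noncomputable def bloch (τ : Matrix (Fin 2) (Fin 2) ℂ) (i : Fin 3) : ℝ := ((τ * pσ i).trace).re

lemma herm_facts (τ : Matrix (Fin 2) (Fin 2) ℂ) (h : τ.IsHermitian) :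
    (τ 0 0).im = 0 ∧ (τ 1 1).im = 0 ∧ (τ 1 0).re = (τ 0 1).re ∧ (τ 1 0).im = -(τ 0 1).im := by
  have h00 := h.apply 0 0
  have h11 := h.apply 1 1
  have h10 := h.apply 0 1
  simp [Complex.ext_iff, Complex.conj_re, Complex.conj_im] at h00 h11 h10
  constructor
  · linarith
  constructor
  · linarith
  constructor
  · linarith [h10.1]
  · linarith [h10.2]

lemma trace_pσ_real (τ : Matrix (Fin 2) (Fin 2) ℂ) (h : τ.IsHermitian) (i : Fin 3) :
    (τ * pσ i).trace = ((bloch τ i : ℝ) : ℂ) := by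
  obtain ⟨h1, h2, h3, h4⟩ := herm_facts τ h
  apply Complex.ext
  · simp [bloch]
  · fin_cases i <;>
      simp [bloch, Matrix.trace, Matrix.diag, Matrix.mul_apply, pσ, Fin.sum_univ_two,
        Complex.add_im, Complex.mul_im] <;> simp_all

lemma bloch_norm (τ : Matrix (Fin 2) (Fin 2) ℂ) (h : IsDensity τ) :
    bloch τ 0 ^ 2 + bloch τ 1 ^ 2 + bloch τ 2 ^ 2 ≤ 1 := by
  obtain ⟨⟨hherm, hpsd⟩, htr⟩ := h
  obtain ⟨h1, h2, h3, h4⟩ := herm_facts τ hherm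
  have e0 : bloch τ 0 = (τ 0 1).re + (τ 1 0).re := by
    simp [bloch, Matrix.trace, Matrix.diag, Matrix.mul_apply, pσ, Fin.sum_univ_two]
  have e1 : bloch τ 1 = -(τ 0 1).im + (τ 1 0).im := by
    simp [bloch, Matrix.trace, Matrix.diag, Matrix.mul_apply, pσ, Fin.sum_univ_two,
      Complex.add_re, Complex.mul_re]
  have e2 : bloch τ 2 = (τ 0 0).re - (τ 1 1).re := by
    simp [bloch, Matrix.trace, Matrix.diag, Matrix.mul_apply, pσ, Fin.sum_univ_two]
    ring
  have htr' : (τ 0 0).re + (τ 1 1).re = 1 := by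
    have := htr
    simp [Matrix.trace, Matrix.diag, Fin.sum_univ_two, Complex.ext_iff] at this
    exact this.1
  have hp : 0 ≤ (τ 0 0).re := by
    have := (Matrix.posSemidef_iff_dotProduct_mulVec.mp ⟨hherm, hpsd⟩).2 ![1, 0]
    rw [Complex.le_def] at this
    simpa [dotProduct, Matrix.mulVec, Fin.sum_univ_two] using this.1
  have hq : 0 ≤ (τ 1 1).re := by
    have := (Matrix.posSemidef_iff_dotProduct_mulVec.mp ⟨hherm, hpsd⟩).2 ![0, 1]
    rw [Complex.le_def] at this
    simpa [dotProduct, Matrix.mulVec, Fin.sum_univ_two] using this.1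
  have key1 := (Matrix.posSemidef_iff_dotProduct_mulVec.mp ⟨hherm, hpsd⟩).2 ![τ 1 1, -(τ 1 0)]
  have key2 := (Matrix.posSemidef_iff_dotProduct_mulVec.mp ⟨hherm, hpsd⟩).2 ![τ 0 1, -(τ 0 0)]
  rw [Complex.le_def] at key1 key2
  have k1 := key1.1
  have k2 := key2.1
  simp [dotProduct, Matrix.mulVec, Fin.sum_univ_two, Complex.add_re, Complex.mul_re,
    Complex.add_im, Complex.mul_im] at k1 k2
  rw [e0, e1, e2, h3, h4]
  rw [h1, h2, h3, h4] at k1 k2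
  ring_nf at k1 k2
  nlinarith [k1, k2, hp, hq, htr', sq_nonneg ((τ 0 1).re), sq_nonneg ((τ 0 1).im)]

lemma convex_lemma {N : ℕ} (p α β γ : Fin N → ℝ) (hp : ∀ k, 0 ≤ p k)
    (h : ∀ k, 0 ≤ α k ∧ β k ^ 2 + γ k ^ 2 ≤ α k ^ 2) :
    (∑ k, p k * β k) ^ 2 + (∑ k, p k * γ k) ^ 2 ≤ (∑ k, p k * α k) ^ 2 := by
  set B := ∑ k, p k * β k with hB
  set C := ∑ k, p k * γ k with hC
  set A := ∑ k, p k * α k with hA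
  have hA0 : 0 ≤ A := Finset.sum_nonneg fun k _ => mul_nonneg (hp k) (h k).1
  have hS0 : (0:ℝ) ≤ B ^ 2 + C ^ 2 := by positivity
  have hstep : B ^ 2 + C ^ 2 ≤ Real.sqrt (B ^ 2 + C ^ 2) * A := by
    have expand : B ^ 2 + C ^ 2 = ∑ k, p k * (B * β k + C * γ k) := by
      have e : ∀ k, p k * (B * β k + C * γ k) = B * (p k * β k) + C * (p k * γ k) :=
        fun k => by ring
      simp_rw [e, Finset.sum_add_distrib, ← Finset.mul_sum, ← hB, ← hC]; ring
    have hbound : ∀ k ∈ Finset.univ, p k * (B * β k + C * γ k)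
        ≤ p k * (Real.sqrt (B ^ 2 + C ^ 2) * α k) := by
      intro k _
      apply mul_le_mul_of_nonneg_left _ (hp k)
      have h2 : (B * β k + C * γ k) ^ 2 ≤ (B ^ 2 + C ^ 2) * (β k ^ 2 + γ k ^ 2) := by
        nlinarith [sq_nonneg (B * γ k - C * β k)]
      calc B * β k + C * γ k ≤ |B * β k + C * γ k| := le_abs_self _
        _ = Real.sqrt ((B * β k + C * γ k) ^ 2) := (Real.sqrt_sq_eq_abs _).symm
        _ ≤ Real.sqrt ((B ^ 2 + C ^ 2) * (β k ^ 2 + γ k ^ 2)) := Real.sqrt_le_sqrt h2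
        _ = Real.sqrt (B ^ 2 + C ^ 2) * Real.sqrt (β k ^ 2 + γ k ^ 2) := Real.sqrt_mul hS0 _
        _ ≤ Real.sqrt (B ^ 2 + C ^ 2) * α k := by
            apply mul_le_mul_of_nonneg_left _ (Real.sqrt_nonneg _)
            calc Real.sqrt (β k ^ 2 + γ k ^ 2) ≤ Real.sqrt (α k ^ 2) :=
                  Real.sqrt_le_sqrt (h k).2
              _ = α k := Real.sqrt_sq (h k).1
    calc B ^ 2 + C ^ 2 = ∑ k, p k * (B * β k + C * γ k) := expand
      _ ≤ ∑ k, p k * (Real.sqrt (B ^ 2 + C ^ 2) * α k) := Finset.sum_le_sum hbound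
      _ = Real.sqrt (B ^ 2 + C ^ 2) * A := by
          rw [hA, Finset.mul_sum]; exact Finset.sum_congr rfl fun k _ => by ring
  nlinarith [hstep, hA0, Real.sqrt_nonneg (B ^ 2 + C ^ 2), Real.sq_sqrt hS0,
    sq_nonneg (A - Real.sqrt (B ^ 2 + C ^ 2))]

lemma key_ineq (x0 x1 x2 y0 y1 y2 : ℝ) (hx : x0^2 + x1^2 + x2^2 ≤ 1)
    (hy : y0^2 + y1^2 + y2^2 ≤ 1) :
    0 ≤ 1 + x2 * y2 ∧ (x2 + y2) ^ 2 + (x0 * y0 + x1 * y1) ^ 2 ≤ (1 + x2 * y2) ^ 2 := by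
  constructor
  · nlinarith [sq_nonneg (x2 + y2), sq_nonneg (x2 - y2), sq_nonneg x0, sq_nonneg x1,
      sq_nonneg y0, sq_nonneg y1]
  · nlinarith [sq_nonneg (x0 * y1 - x1 * y0), sq_nonneg x0, sq_nonneg x1, sq_nonneg y0,
      sq_nonneg y1, mul_nonneg (mul_nonneg (sq_nonneg x0) (sq_nonneg y0)) (sq_nonneg x1),
      mul_le_mul hx hy (by positivity) (by linarith [sq_nonneg x0, sq_nonneg x1, sq_nonneg x2])]

lemma onb_col (a : Fin 3 → Fin 3 → ℝ) (ha : RightHandedONB a) (k l : Fin 3) :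
    (∑ i, a i k * a i l) = if k = l then 1 else 0 := by
  have hM : (Matrix.of a) * (Matrix.of a).transpose = 1 := by
    ext i j
    simpa [Matrix.mul_apply, Matrix.one_apply] using ha.1 i j
  have hM' : (Matrix.of a).transpose * (Matrix.of a) = 1 := mul_eq_one_comm.mp hM
  have := congrFun (congrFun hM' k) l
  simpa [Matrix.mul_apply, Matrix.one_apply, mul_comm] using this

lemma onb_sum_sq (a : Fin 3 → Fin 3 → ℝ) (ha : RightHandedONB a) (r : Fin 3 → ℝ) :
    (∑ i, (∑ j, a i j * r j) ^ 2) = ∑ j, r j ^ 2 := by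
  have c00 := onb_col a ha 0 0
  have c01 := onb_col a ha 0 1
  have c02 := onb_col a ha 0 2
  have c11 := onb_col a ha 1 1
  have c12 := onb_col a ha 1 2
  have c22 := onb_col a ha 2 2
  simp only [Fin.sum_univ_three] at c00 c01 c02 c11 c12 c22 ⊢
  norm_num [Fin.ext_iff] at c00 c01 c02 c11 c12 c22
  linear_combination (r 0 ^ 2) * c00 + (2 * r 0 * r 1) * c01 + (2 * r 0 * r 2) * c02 +
    (r 1 ^ 2) * c11 + (2 * r 1 * r 2) * c12 + (r 2 ^ 2) * c22

lemma trace_I2_density (τ : Matrix (Fin 2) (Fin 2) ℂ) (h : IsDensity τ) :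
    (τ * I2).trace = (((1:ℝ) : ℂ)) := by
  simp [I2, h.2]

lemma trace_dotSigma (τ : Matrix (Fin 2) (Fin 2) ℂ) (h : τ.IsHermitian) (v : Fin 3 → ℝ) :
    (τ * dotSigma v).trace = ((∑ k, v k * bloch τ k : ℝ) : ℂ) := by
  rw [dotSigma, Matrix.mul_sum]
  rw [Matrix.trace_sum]
  push_cast
  refine Finset.sum_congr rfl fun k _ => ?_
  rw [Matrix.mul_smul, Matrix.trace_smul, trace_pσ_real τ h]
  simp [Complex.real_smul]

lemma expec_sum_smul {N : ℕ} (p : Fin N → ℝ) (σ : Fin N → Matrix Q3 Q3 ℂ) (X : Matrix Q3 Q3 ℂ) :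
    expec (∑ k, p k • σ k) X = ∑ k, p k * expec (σ k) X := by
  simp [expec, Finset.sum_mul, Matrix.smul_mul, Matrix.trace_sum, Matrix.trace_smul,
    Complex.real_smul, Complex.mul_re]

lemma expec_add_right (ρ X Y : Matrix Q3 Q3 ℂ) :
    expec ρ (X + Y) = expec ρ X + expec ρ Y := by
  simp [expec, Matrix.mul_add]

lemma expec_op3_prod (τ1 τ2 τ3 X Y Z : Matrix (Fin 2) (Fin 2) ℂ) (x y z : ℝ)
    (hx : (τ1 * X).trace = (x : ℂ)) (hy : (τ2 * Y).trace = (y : ℂ))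
    (hz : (τ3 * Z).trace = (z : ℂ)) :
    expec (op3 τ1 τ2 τ3) (op3 X Y Z) = x * y * z := by
  rw [expec, trace_op3_mul, hx, hy, hz]
  push_cast
  simp

theorem stmt19 (ρ : Matrix Q3 Q3 ℂ) (hρ : IsDensity ρ) (hsep : FullySepState ρ)
    (a b c : Fin 3 → Fin 3 → ℝ)
    (ha : RightHandedONB a) (hb : RightHandedONB b) (hc : RightHandedONB c) :
    0 ≤ F1 (fun i => dotSigma (b i)) (fun i => dotSigma (c i)) ρ ∧
    0 ≤ F2 (fun i => dotSigma (a i)) (fun i => dotSigma (c i)) ρ ∧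
    0 ≤ F3 (fun i => dotSigma (a i)) (fun i => dotSigma (b i)) ρ := by
  obtain ⟨N, p, ρ1, ρ2, ρ3, hp0, hp1, hd1, hd2, hd3, hρeq⟩ := hsep
  set x : Fin N → Fin 3 → ℝ := fun k i => ∑ j, a i j * bloch (ρ1 k) j with hxdef
  set y : Fin N → Fin 3 → ℝ := fun k i => ∑ j, b i j * bloch (ρ2 k) j with hydef
  set z : Fin N → Fin 3 → ℝ := fun k i => ∑ j, c i j * bloch (ρ3 k) j with hzdef
  have hxsq : ∀ k, x k 0 ^ 2 + x k 1 ^ 2 + x k 2 ^ 2 ≤ 1 := by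
    intro k
    have h1 : x k 0 ^ 2 + x k 1 ^ 2 + x k 2 ^ 2
        = bloch (ρ1 k) 0 ^ 2 + bloch (ρ1 k) 1 ^ 2 + bloch (ρ1 k) 2 ^ 2 := by
      simpa [Fin.sum_univ_three, hxdef] using onb_sum_sq a ha (bloch (ρ1 k))
    rw [h1]; exact bloch_norm _ (hd1 k)
  have hysq : ∀ k, y k 0 ^ 2 + y k 1 ^ 2 + y k 2 ^ 2 ≤ 1 := by
    intro k
    have h1 : y k 0 ^ 2 + y k 1 ^ 2 + y k 2 ^ 2
        = bloch (ρ2 k) 0 ^ 2 + bloch (ρ2 k) 1 ^ 2 + bloch (ρ2 k) 2 ^ 2 := by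
      simpa [Fin.sum_univ_three, hydef] using onb_sum_sq b hb (bloch (ρ2 k))
    rw [h1]; exact bloch_norm _ (hd2 k)
  have hzsq : ∀ k, z k 0 ^ 2 + z k 1 ^ 2 + z k 2 ^ 2 ≤ 1 := by
    intro k
    have h1 : z k 0 ^ 2 + z k 1 ^ 2 + z k 2 ^ 2
        = bloch (ρ3 k) 0 ^ 2 + bloch (ρ3 k) 1 ^ 2 + bloch (ρ3 k) 2 ^ 2 := by
      simpa [Fin.sum_univ_three, hzdef] using onb_sum_sq c hc (bloch (ρ3 k))
    rw [h1]; exact bloch_norm _ (hd3 k)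
  have tx : ∀ k i, (ρ1 k * dotSigma (a i)).trace = ((x k i : ℝ) : ℂ) := fun k i =>
    trace_dotSigma _ (hd1 k).1.1 _
  have ty : ∀ k i, (ρ2 k * dotSigma (b i)).trace = ((y k i : ℝ) : ℂ) := fun k i =>
    trace_dotSigma _ (hd2 k).1.1 _
  have tz : ∀ k i, (ρ3 k * dotSigma (c i)).trace = ((z k i : ℝ) : ℂ) := fun k i =>
    trace_dotSigma _ (hd3 k).1.1 _
  have t1 : ∀ k, (ρ1 k * I2).trace = (((1:ℝ)) : ℂ) := fun k => trace_I2_density _ (hd1 k)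
  have t2 : ∀ k, (ρ2 k * I2).trace = (((1:ℝ)) : ℂ) := fun k => trace_I2_density _ (hd2 k)
  have t3 : ∀ k, (ρ3 k * I2).trace = (((1:ℝ)) : ℂ) := fun k => trace_I2_density _ (hd3 k)
  refine ⟨?_, ?_, ?_⟩
  · -- F1 : qubits 2 and 3, observables b's and c's
    have E1 : expec ρ (1 + op3 I2 (dotSigma (b 2)) (dotSigma (c 2)))
        = ∑ k, p k * (1 + y k 2 * z k 2) := by
      rw [hρeq, expec_sum_smul]
      refine Finset.sum_congr rfl fun k _ => ?_
      rw [expec_add_right, one_eq_op3,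
        expec_op3_prod _ _ _ _ _ _ 1 1 1 (t1 k) (t2 k) (t3 k),
        expec_op3_prod _ _ _ _ _ _ 1 (y k 2) (z k 2) (t1 k) (ty k 2) (tz k 2)]
      ring
    have E2 : expec ρ (op3 I2 (dotSigma (b 2)) I2 + op3 I2 I2 (dotSigma (c 2)))
        = ∑ k, p k * (y k 2 + z k 2) := by
      rw [hρeq, expec_sum_smul]
      refine Finset.sum_congr rfl fun k _ => ?_
      rw [expec_add_right,
        expec_op3_prod _ _ _ _ _ _ 1 (y k 2) 1 (t1 k) (ty k 2) (t3 k),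
        expec_op3_prod _ _ _ _ _ _ 1 1 (z k 2) (t1 k) (t2 k) (tz k 2)]
      ring
    have E3 : expec ρ (op3 I2 (dotSigma (b 0)) (dotSigma (c 0))
          + op3 I2 (dotSigma (b 1)) (dotSigma (c 1)))
        = ∑ k, p k * (y k 0 * z k 0 + y k 1 * z k 1) := by
      rw [hρeq, expec_sum_smul]
      refine Finset.sum_congr rfl fun k _ => ?_
      rw [expec_add_right,
        expec_op3_prod _ _ _ _ _ _ 1 (y k 0) (z k 0) (t1 k) (ty k 0) (tz k 0),
        expec_op3_prod _ _ _ _ _ _ 1 (y k 1) (z k 1) (t1 k) (ty k 1) (tz k 1)]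
      ring
    have hcv := convex_lemma p (fun k => 1 + y k 2 * z k 2) (fun k => y k 2 + z k 2)
      (fun k => y k 0 * z k 0 + y k 1 * z k 1) hp0
      (fun k => key_ineq _ _ _ _ _ _ (hysq k) (hzsq k))
    simp only [F1]
    rw [E1, E2, E3]
    linarith [hcv]
  · -- F2 : qubits 1 and 3, observables a's and c's
    have E1 : expec ρ (1 + op3 (dotSigma (a 2)) I2 (dotSigma (c 2)))
        = ∑ k, p k * (1 + x k 2 * z k 2) := by
      rw [hρeq, expec_sum_smul]
      refine Finset.sum_congr rfl fun k _ => ?_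
      rw [expec_add_right, one_eq_op3,
        expec_op3_prod _ _ _ _ _ _ 1 1 1 (t1 k) (t2 k) (t3 k),
        expec_op3_prod _ _ _ _ _ _ (x k 2) 1 (z k 2) (tx k 2) (t2 k) (tz k 2)]
      ring
    have E2 : expec ρ (op3 (dotSigma (a 2)) I2 I2 + op3 I2 I2 (dotSigma (c 2)))
        = ∑ k, p k * (x k 2 + z k 2) := by
      rw [hρeq, expec_sum_smul]
      refine Finset.sum_congr rfl fun k _ => ?_
      rw [expec_add_right,
        expec_op3_prod _ _ _ _ _ _ (x k 2) 1 1 (tx k 2) (t2 k) (t3 k),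
        expec_op3_prod _ _ _ _ _ _ 1 1 (z k 2) (t1 k) (t2 k) (tz k 2)]
      ring
    have E3 : expec ρ (op3 (dotSigma (a 0)) I2 (dotSigma (c 0))
          + op3 (dotSigma (a 1)) I2 (dotSigma (c 1)))
        = ∑ k, p k * (x k 0 * z k 0 + x k 1 * z k 1) := by
      rw [hρeq, expec_sum_smul]
      refine Finset.sum_congr rfl fun k _ => ?_
      rw [expec_add_right,
        expec_op3_prod _ _ _ _ _ _ (x k 0) 1 (z k 0) (tx k 0) (t2 k) (tz k 0),
        expec_op3_prod _ _ _ _ _ _ (x k 1) 1 (z k 1) (tx k 1) (t2 k) (tz k 1)]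
      ring
    have hcv := convex_lemma p (fun k => 1 + x k 2 * z k 2) (fun k => x k 2 + z k 2)
      (fun k => x k 0 * z k 0 + x k 1 * z k 1) hp0
      (fun k => key_ineq _ _ _ _ _ _ (hxsq k) (hzsq k))
    simp only [F2]
    rw [E1, E2, E3]
    linarith [hcv]
  · -- F3 : qubits 1 and 2, observables a's and b's
    have E1 : expec ρ (1 + op3 (dotSigma (a 2)) (dotSigma (b 2)) I2)
        = ∑ k, p k * (1 + x k 2 * y k 2) := by
      rw [hρeq, expec_sum_smul]
      refine Finset.sum_congr rfl fun k _ => ?_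
      rw [expec_add_right, one_eq_op3,
        expec_op3_prod _ _ _ _ _ _ 1 1 1 (t1 k) (t2 k) (t3 k),
        expec_op3_prod _ _ _ _ _ _ (x k 2) (y k 2) 1 (tx k 2) (ty k 2) (t3 k)]
      ring
    have E2 : expec ρ (op3 (dotSigma (a 2)) I2 I2 + op3 I2 (dotSigma (b 2)) I2)
        = ∑ k, p k * (x k 2 + y k 2) := by
      rw [hρeq, expec_sum_smul]
      refine Finset.sum_congr rfl fun k _ => ?_
      rw [expec_add_right,
        expec_op3_prod _ _ _ _ _ _ (x k 2) 1 1 (tx k 2) (t2 k) (t3 k),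
        expec_op3_prod _ _ _ _ _ _ 1 (y k 2) 1 (t1 k) (ty k 2) (t3 k)]
      ring
    have E3 : expec ρ (op3 (dotSigma (a 0)) (dotSigma (b 0)) I2
          + op3 (dotSigma (a 1)) (dotSigma (b 1)) I2)
        = ∑ k, p k * (x k 0 * y k 0 + x k 1 * y k 1) := by
      rw [hρeq, expec_sum_smul]
      refine Finset.sum_congr rfl fun k _ => ?_
      rw [expec_add_right,
        expec_op3_prod _ _ _ _ _ _ (x k 0) (y k 0) 1 (tx k 0) (ty k 0) (t3 k),
        expec_op3_prod _ _ _ _ _ _ (x k 1) (y k 1) 1 (tx k 1) (ty k 1) (t3 k)]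
      ring
    have hcv := convex_lemma p (fun k => 1 + x k 2 * y k 2) (fun k => x k 2 + y k 2)
      (fun k => x k 0 * y k 0 + x k 1 * y k 1) hp0
      (fun k => key_ineq _ _ _ _ _ _ (hxsq k) (hysq k))
    simp only [F3]
    rw [E1, E2, E3]
    linarith [hcv]
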